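/- Let u be an upcycle for {0,...,a−1}^n with diamondicity d, let k ≥ 1, and let v be a cyclic partial word over {0,...,k−1} with the same length and frame as u^(k^{n−d}) (the concatenation of k^{n−d} copies of u read cyclically). Then a·v + u^(k^{n−d}) (componentwise, with ◊+◊ := ◊) is an upcycle for {0,...,ak−1}^n if and only if the total word v∖◊ obtained by deleting the diamonds of v is a (k, n−d, (n−d)a^{n−d}/n)-perfect necklace. -/

import Mathlib

/-- The window of length `n` of the cyclic partial word `u` starting at position `i`
covers the total word `w`. -/
def Covers (a n : ℕ) (u : ℕ → Option (Fin a)) (i : ℕ) (w : Fin n → Fin a) : Prop :=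
  ∀ j : Fin n, u (i + (j : ℕ)) = none ∨ u (i + (j : ℕ)) = some (w j)

/-- `u`, viewed as a cyclic partial word of length `N`, is a universal partial cycle
for `(Fin a)^n`. -/
def IsUpcycle (a n N : ℕ) (u : ℕ → Option (Fin a)) : Prop :=
  (∀ i, u (i + N) = u i) ∧ ∀ w : Fin n → Fin a, ∃! i : Fin N, Covers a n u (i : ℕ) w

/-- `v`, viewed as a cyclic word of length `t * a ^ n`, is an `(a, n, t)`-perfect
necklace. -/
def IsPerfectNecklace (a n t : ℕ) (v : ℕ → Fin a) : Prop :=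
  (∀ i, v (i + t * a ^ n) = v i) ∧
  ∀ j : Fin t, ∀ w : Fin n → Fin a,
    ∃! i : Fin (t * a ^ n), (i : ℕ) % t = (j : ℕ) ∧
      ∀ m : Fin n, v ((i : ℕ) + (m : ℕ)) = w m

namespace AlphMul

variable {p : ℕ → Prop} [DecidablePred p] {T n ℓ : ℕ}

lemma count_add_period (hper : ∀ i, p (i + T) ↔ p i) (i : ℕ) :
    Nat.count p (i + T) = Nat.count p i + Nat.count p T := by
  induction i with
  | zero => simp
  | succ i ih =>
      have h1 : i + 1 + T = (i + T) + 1 := by omega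
      rw [h1, Nat.count_succ, Nat.count_succ, ih]
      by_cases h : p i
      · simp only [h, if_true, (hper i).2 h]; omega
      · simp only [h, if_false, if_neg (fun hh => h ((hper i).1 hh))]; omega

lemma count_add_nsmul (hper : ∀ i, p (i + T) ↔ p i) (i r : ℕ) :
    Nat.count p (i + r * T) = Nat.count p i + r * Nat.count p T := by
  induction r with
  | zero => simp
  | succ r ih =>
      have h1 : i + (r + 1) * T = (i + r * T) + T := by ring
      rw [h1, count_add_period hper, ih]; ring

lemma count_nsmul (hper : ∀ i, p (i + T) ↔ p i) (r : ℕ) :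
    Nat.count p (r * T) = r * Nat.count p T := by
  simpa using count_add_nsmul hper 0 r

lemma nth_add_period (hinf : (setOf p).Infinite) (hper : ∀ i, p (i + T) ↔ p i) (m : ℕ) :
    Nat.nth p (m + Nat.count p T) = Nat.nth p m + T := by
  have h1 : p (Nat.nth p m) := Nat.nth_mem_of_infinite hinf m
  have h2 : p (Nat.nth p m + T) := (hper _).2 h1
  have h3 : Nat.count p (Nat.nth p m + T) = m + Nat.count p T := by
    rw [count_add_period hper, Nat.count_nth_of_infinite hinf]
  calc Nat.nth p (m + Nat.count p T) = Nat.nth p (Nat.count p (Nat.nth p m + T)) := by rw [h3]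
  _ = Nat.nth p m + T := Nat.nth_count h2

lemma nth_add_nsmul (hinf : (setOf p).Infinite) (hper : ∀ i, p (i + T) ↔ p i) (m r : ℕ) :
    Nat.nth p (m + r * Nat.count p T) = Nat.nth p m + r * T := by
  induction r with
  | zero => simp
  | succ r ih =>
      have h1 : m + (r + 1) * Nat.count p T = (m + r * Nat.count p T) + Nat.count p T := by ring
      rw [h1, nth_add_period hinf hper, ih]; ring

lemma count_add_window (hwin : ∀ i, Nat.count (fun j => p (i + j)) n = ℓ) (i : ℕ) :
    Nat.count p (i + n) = Nat.count p i + ℓ := by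
  rw [Nat.count_add, hwin]

lemma nth_window_mem (hinf : (setOf p).Infinite)
    (hwin : ∀ i, Nat.count (fun j => p (i + j)) n = ℓ) (i : ℕ) {l : ℕ} (hl : l < ℓ) :
    i ≤ Nat.nth p (Nat.count p i + l) ∧ Nat.nth p (Nat.count p i + l) < i + n := by
  constructor
  · by_contra h
    push_neg at h
    have := (Nat.lt_nth_iff_count_lt hinf).2 h
    omega
  · have h2 : Nat.count p i + l < Nat.count p (i + n) := by
      rw [count_add_window hwin]; omega
    exact (Nat.lt_nth_iff_count_lt hinf).1 h2

lemma window_index (hinf : (setOf p).Infinite)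
    (hwin : ∀ i, Nat.count (fun j => p (i + j)) n = ℓ) {i q : ℕ} (hq : p q)
    (h1 : i ≤ q) (h2 : q < i + n) :
    Nat.count p i ≤ Nat.count p q ∧ Nat.count p q < Nat.count p i + ℓ ∧
      Nat.nth p (Nat.count p q) = q := by
  refine ⟨Nat.count_monotone p h1, ?_, Nat.nth_count hq⟩
  have h3 : Nat.count p (q + 1) ≤ Nat.count p (i + n) := Nat.count_monotone p (by omega)
  have h4 : Nat.count p (q + 1) = Nat.count p q + 1 := Nat.count_succ_eq_succ_count hq
  have h5 := count_add_window hwin i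
  omega

lemma split_unique {a x1 x2 y1 y2 : ℕ} (ha : 0 < a) (h1 : y1 < a) (h2 : y2 < a)
    (h : a * x1 + y1 = a * x2 + y2) : x1 = x2 ∧ y1 = y2 := by
  have e1 : (a * x1 + y1) % a = y1 := by rw [Nat.mul_add_mod, Nat.mod_eq_of_lt h1]
  have e2 : (a * x2 + y2) % a = y2 := by rw [Nat.mul_add_mod, Nat.mod_eq_of_lt h2]
  have hy : y1 = y2 := by rw [← e1, ← e2, h]
  refine ⟨?_, hy⟩
  have : a * x1 = a * x2 := by omega
  exact Nat.eq_of_mul_eq_mul_left ha this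

lemma mod_iff_of_shift {K : ℕ} (B : ℕ → Prop) (hshift : ∀ r, B (r + K) ↔ B r) :
    ∀ r, B (r % K) ↔ B r := by
  intro r
  induction r using Nat.strong_induction_on with
  | _ r ih =>
    rcases Nat.lt_or_ge r K with h | h
    · rw [Nat.mod_eq_of_lt h]
    · rcases Nat.eq_zero_or_pos K with rfl | hK
      · simp
      · rw [Nat.mod_eq_sub_mod h]
        have h2 := hshift (r - K)
        have h1 : r - K + K = r := by omega
        rw [h1] at h2
        exact (ih (r - K) (by omega)).trans h2.symm

lemma forall_of_lt_of_shift {t : ℕ} (ht : 0 < t) (C : ℕ → Prop)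
    (hshift : ∀ c, C (c + t) ↔ C c) (h : ∀ c < t, C c) : ∀ c, C c := by
  intro c
  induction c using Nat.strong_induction_on with
  | _ c ih =>
    rcases Nat.lt_or_ge c t with h1 | h1
    · exact h c h1
    · have h2 : c - t + t = c := by omega
      rw [← h2]
      exact (hshift (c - t)).2 (ih (c - t) (by omega))

lemma existsUnique_shift {K : ℕ} (hK : 0 < K) (s : ℕ) (B : ℕ → Prop)
    (hmod : ∀ r, B (r % K) ↔ B r) :
    (∃! r : Fin K, B ((r : ℕ) + s)) ↔ ∃! r : Fin K, B (r : ℕ) := by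
  obtain ⟨K, rfl⟩ : ∃ K', K = K' + 1 := ⟨K - 1, by omega⟩
  refine Equiv.existsUnique_congr (Equiv.addRight (⟨s % (K + 1), Nat.mod_lt _ hK⟩ : Fin (K + 1))) ?_
  intro r
  have hval : ((r + (⟨s % (K + 1), Nat.mod_lt _ hK⟩ : Fin (K + 1)) : Fin (K + 1)) : ℕ)
      = ((r : ℕ) + s % (K + 1)) % (K + 1) := rfl
  have h2 : ((r : ℕ) + s % (K + 1)) % (K + 1) = ((r : ℕ) + s) % (K + 1) := by
    rw [Nat.add_mod, Nat.mod_mod_of_dvd s (dvd_refl _), ← Nat.add_mod]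
  rw [Equiv.coe_addRight, hval, h2, hmod]

/-- partial-word variant of the matching condition -/
def MatchW {k : ℕ} (v : ℕ → Option (Fin k)) (p : ℕ → Prop) (N0 L : ℕ) (c r : ℕ)
    (x : Fin L → Fin k) : Prop :=
  ∀ l : Fin L, v (Nat.nth p (c + (l : ℕ)) + r * N0) = some (x l)

def CoreW {k : ℕ} (v : ℕ → Option (Fin k)) (p : ℕ → Prop) (N0 L K : ℕ) (c : ℕ) : Prop :=
  ∀ x : Fin L → Fin k, ∃! r : Fin K, MatchW v p N0 L c (r : ℕ) x


set_option maxHeartbeats 1000000 in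
lemma aux_main (a n d k : ℕ) (ha : 2 ≤ a) (hk : 1 ≤ k) (hn : 0 < n) (hdn : d < n)
    (u : ℕ → Option (Fin a))
    (hu : IsUpcycle a n (a ^ (n - d)) u)
    (hdiam : ∀ i, ((Finset.range n).filter (fun j => u (i + j) = none)).card = d)
    (v : ℕ → Option (Fin k))
    (hvper : ∀ i, v (i + (a * k) ^ (n - d)) = v i)
    (hframe : ∀ i, v i = none ↔ u i = none)
    (P : ℕ → Option (Fin (a * k)))
    (hP1 : ∀ i, u i = none → P i = none)
    (hP2 : ∀ i (x : Fin k) (y : Fin a), v i = some x → u i = some y →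
      ∃ z : Fin (a * k), P i = some z ∧ (z : ℕ) = a * (x : ℕ) + (y : ℕ)) :
    IsUpcycle (a * k) n ((a * k) ^ (n - d)) P ↔
    IsPerfectNecklace k (n - d) ((n - d) * a ^ (n - d) / n)
      (fun m => (v (Nat.nth (fun i => v i ≠ none) m)).getD ⟨0, hk⟩) := by
  classical
  set L := n - d with hLdef
  have hL : 0 < L := by omega
  set p : ℕ → Prop := fun i => v i ≠ none with hpdef
  letI : DecidablePred p := fun i => Classical.propDecidable _
  set N0 := a ^ L with hN0def
  set K := k ^ L with hKdef
  have hapos : 0 < a := by omega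
  have hN0pos : 0 < N0 := pow_pos hapos L
  have hKpos : 0 < K := pow_pos hk L
  have hNsplit : (a * k) ^ L = N0 * K := mul_pow a k L
  obtain ⟨hu1, hu2⟩ := hu
  -- iterated periodicity of u
  have hu_nsmul : ∀ i r, u (i + r * N0) = u i := by
    intro i r
    induction r with
    | zero => simp
    | succ r ih =>
        have h1 : i + (r + 1) * N0 = (i + r * N0) + N0 := by ring
        rw [h1, hu1, ih]
  have hv1 : ∀ i, v (i + N0 * K) = v i := by
    intro i; rw [← hNsplit]; exact hvper i
  have hvK1 : ∀ q, v (q + K * N0) = v q := by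
    intro q; rw [show K * N0 = N0 * K from mul_comm K N0]; exact hv1 q
  have hpu : ∀ i, p i ↔ u i ≠ none := fun i => not_iff_not.2 (hframe i)
  have hp1 : ∀ i, p (i + N0) ↔ p i := by
    intro i; rw [hpu, hpu, hu1]
  have hp_nsmul : ∀ i r, p (i + r * N0) ↔ p i := by
    intro i r
    induction r with
    | zero => simp
    | succ r ih =>
        have h1 : i + (r + 1) * N0 = (i + r * N0) + N0 := by ring
        rw [h1, hp1, ih]
  -- each window of length n contains exactly L non-diamonds
  have hwin : ∀ i, Nat.count (fun j => p (i + j)) n = L := by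
    intro i
    have h1 := hdiam i
    have h2 : Nat.count (fun j => p (i + j)) n
        = ((Finset.range n).filter (fun j => p (i + j))).card :=
      Nat.count_eq_card_filter_range _ n
    have h3 : ((Finset.range n).filter (fun j => p (i + j))).card
        + ((Finset.range n).filter (fun j => ¬ p (i + j))).card = (Finset.range n).card :=
      Finset.card_filter_add_card_filter_not (fun j => p (i + j))
    have h4 : ((Finset.range n).filter (fun j => ¬ p (i + j)))
        = ((Finset.range n).filter (fun j => u (i + j) = none)) := by
      apply Finset.filter_congr
      intro j _
      show ¬ (v (i + j) ≠ none) ↔ u (i + j) = none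
      rw [not_not]
      exact hframe _
    rw [Finset.card_range] at h3
    rw [h4, h1] at h3
    omega
  -- existence of a non-diamond below N0
  have hex : ∃ q, q < N0 ∧ p q := by
    have h5 : Nat.count (fun j => p (0 + j)) n = L := hwin 0
    have h6 : ∃ j, j < n ∧ p (0 + j) := by
      by_contra hcon
      push_neg at hcon
      have h7 : Nat.count (fun j => p (0 + j)) n = 0 := by
        rw [Nat.count_eq_card_filter_range _ n, Finset.card_eq_zero, Finset.filter_eq_empty_iff]
        intro j hj
        exact hcon j (Finset.mem_range.1 hj)
      omega
    obtain ⟨j, hj, hpj⟩ := h6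
    rw [zero_add] at hpj
    refine ⟨j % N0, Nat.mod_lt _ hN0pos, ?_⟩
    have h7 := Nat.mod_add_div' j N0
    have h8 := hp_nsmul (j % N0) (j / N0)
    rw [h7] at h8
    exact h8.1 hpj
  have hinf : (setOf p).Infinite := by
    obtain ⟨q, hq, hpq⟩ := hex
    apply Set.infinite_of_injective_forall_mem (f := fun m : ℕ => q + m * N0)
    · intro m1 m2 hm
      simp only at hm
      have h1 : m1 * N0 = m2 * N0 := by omega
      exact Nat.eq_of_mul_eq_mul_right hN0pos h1
    · intro m
      exact (hp_nsmul q m).2 hpq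
  set t := Nat.count p N0 with htdef
  have hcount_add : ∀ i r, Nat.count p (i + r * N0) = Nat.count p i + r * t :=
    count_add_nsmul hp1
  have hnth_add : ∀ m r, Nat.nth p (m + r * t) = Nat.nth p m + r * N0 :=
    nth_add_nsmul hinf hp1
  have hcn : ∀ r, Nat.count p (r * n) = r * L := by
    intro r
    induction r with
    | zero => simp
    | succ r ih =>
        have e : (r + 1) * n = r * n + n := by ring
        rw [e, count_add_window hwin, ih]; ring
  have htn : n * t = L * N0 := by
    have h1 := count_nsmul hp1 n
    have h2 := hcn N0
    rw [show N0 * n = n * N0 from mul_comm N0 n] at h2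
    rw [h1] at h2
    rw [h2, mul_comm N0 L]
  have ht_eq : L * N0 / n = t := by
    rw [← htn]
    exact Nat.mul_div_cancel_left t hn
  have htpos : 0 < t := by
    obtain ⟨q, hq, hpq⟩ := hex
    have h1 : Nat.count p (q + 1) = Nat.count p q + 1 := Nat.count_succ_eq_succ_count hpq
    have h2 : Nat.count p (q + 1) ≤ Nat.count p N0 := Nat.count_monotone p (by omega)
    omega
  -- facts about the product word P
  have hP2' : ∀ i, u i ≠ none → ∃ (x : Fin k) (y : Fin a) (z : Fin (a * k)),
      v i = some x ∧ u i = some y ∧ P i = some z ∧ (z : ℕ) = a * (x : ℕ) + (y : ℕ) := by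
    intro i hui
    obtain ⟨y, hy⟩ := Option.ne_none_iff_exists'.1 hui
    have hvi : v i ≠ none := fun hh => hui ((hframe i).1 hh)
    obtain ⟨x, hx⟩ := Option.ne_none_iff_exists'.1 hvi
    obtain ⟨z, hz1, hz2⟩ := hP2 i x y hx hy
    exact ⟨x, y, z, hx, hy, hz1, hz2⟩
  have hPcases : ∀ i, P i = none ↔ u i = none := by
    intro i
    constructor
    · intro h
      by_contra hne
      obtain ⟨_, _, zz, _, _, hz, _⟩ := hP2' i hne
      rw [h] at hz
      cases hz
    · exact hP1 i
  have huper' : ∀ i, u (i + (a * k) ^ L) = u i := by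
    intro i
    rw [hNsplit, mul_comm N0 K]
    exact hu_nsmul i K
  have hPper : ∀ i, P (i + (a * k) ^ L) = P i := by
    intro i
    by_cases hnone : u i = none
    · rw [hP1 _ (by rw [huper' i]; exact hnone), hP1 _ hnone]
    · obtain ⟨xx, yy, zz, hx, hy, hz, hzv⟩ := hP2' i hnone
      obtain ⟨xx', yy', zz', hx', hy', hz', hzv'⟩ :=
        hP2' (i + (a * k) ^ L) (by rw [huper' i]; exact hnone)
      rw [hz, hz']
      have e1 : xx' = xx := by
        have h1 : v (i + (a * k) ^ L) = v i := hvper i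
        exact Option.some_inj.1 (hx'.symm.trans (h1.trans hx))
      have e2 : yy' = yy := by
        have h1 := huper' i
        exact Option.some_inj.1 (hy'.symm.trans (h1.trans hy))
      exact congrArg some (Fin.ext (by rw [hzv, hzv', e1, e2]))
  -- coverage characterization for P
  have hcovP : ∀ (i' : ℕ) (w : Fin n → Fin (a * k)) (y : Fin n → Fin a) (X : Fin n → Fin k),
      (∀ j : Fin n, (w j : ℕ) = a * (X j : ℕ) + (y j : ℕ)) →
      (Covers (a * k) n P i' w ↔
        (Covers a n u i' y ∧ ∀ j : Fin n, p (i' + (j : ℕ)) → v (i' + (j : ℕ)) = some (X j))) := by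
    intro i' w y X hw
    constructor
    · intro h
      constructor
      · intro j
        by_cases hnone : u (i' + (j : ℕ)) = none
        · exact Or.inl hnone
        · obtain ⟨xx, yy, zz, hx, hy, hz, hzv⟩ := hP2' _ hnone
          rcases h j with h1 | h1
          · rw [hz] at h1; exact absurd h1 (by simp)
          · rw [hz] at h1
            have hzw : (zz : ℕ) = (w j : ℕ) := by rw [Option.some_inj.1 h1]
            have hsp := split_unique hapos yy.isLt (y j).isLt (by rw [← hzv, hzw, hw j])
            exact Or.inr (by rw [hy]; exact congrArg some (Fin.ext hsp.2))
      · intro j hpj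
        have hnone : u (i' + (j : ℕ)) ≠ none := (hpu _).1 hpj
        obtain ⟨xx, yy, zz, hx, hy, hz, hzv⟩ := hP2' _ hnone
        rcases h j with h1 | h1
        · rw [hz] at h1; exact absurd h1 (by simp)
        · rw [hz] at h1
          have hzw : (zz : ℕ) = (w j : ℕ) := by rw [Option.some_inj.1 h1]
          have hsp := split_unique hapos yy.isLt (y j).isLt (by rw [← hzv, hzw, hw j])
          rw [hx]
          exact congrArg some (Fin.ext hsp.1)
    · rintro ⟨h1, h2⟩ j
      by_cases hnone : u (i' + (j : ℕ)) = none
      · exact Or.inl (hP1 _ hnone)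
      · obtain ⟨xx, yy, zz, hx, hy, hz, hzv⟩ := hP2' _ hnone
        right
        rw [hz]
        have hyj : yy = y j := by
          have h3 := (h1 j).resolve_left hnone
          exact Option.some_inj.1 (hy.symm.trans h3)
        have hxj : xx = X j := by
          have h3 := h2 j ((hpu _).2 hnone)
          exact Option.some_inj.1 (hx.symm.trans h3)
        exact congrArg some (Fin.ext (by rw [hzv, hw j, hxj, hyj]))
  -- covering by u only depends on the residue mod N0, and pins it down
  have hcov_mod : ∀ (i : ℕ) (y : Fin n → Fin a), Covers a n u i y ↔ Covers a n u (i % N0) y := by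
    intro i y
    unfold Covers
    apply forall_congr'
    intro j
    rw [show i + (j : ℕ) = (i % N0 + (j : ℕ)) + (i / N0) * N0 from by
      have h1 := Nat.mod_add_div' i N0; omega, hu_nsmul]
  have hcovu_pin : ∀ (y : Fin n → Fin a) (i0 : ℕ), i0 < N0 → Covers a n u i0 y →
      ∀ i', i' < N0 * K → (Covers a n u i' y ↔ i' % N0 = i0) := by
    intro y i0 hi0 hc0 i' _
    obtain ⟨j0, hj0c, hj0u⟩ := hu2 y
    have hi0j : (⟨i0, hi0⟩ : Fin N0) = j0 := hj0u _ hc0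
    constructor
    · intro hc
      have h1 := (hcov_mod i' y).1 hc
      have h2 : (⟨i' % N0, Nat.mod_lt _ hN0pos⟩ : Fin N0) = j0 := hj0u _ h1
      exact congrArg Fin.val (h2.trans hi0j.symm)
    · intro hmod
      apply (hcov_mod i' y).2
      rw [hmod]
      exact hc0
  -- central characterization: coverage of P at i0 + r*N0 vs the matching condition
  have hchar : ∀ (i0 : ℕ), i0 < N0 →
      ∀ (y : Fin n → Fin a) (X : Fin n → Fin k) (w : Fin n → Fin (a * k)) (x : Fin L → Fin k),
      (∀ j : Fin n, (w j : ℕ) = a * (X j : ℕ) + (y j : ℕ)) →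
      (∀ (l : Fin L) (j : Fin n),
          i0 + (j : ℕ) = Nat.nth p (Nat.count p i0 + (l : ℕ)) → X j = x l) →
      ∀ r : ℕ, (Covers (a * k) n P (i0 + r * N0) w ↔
        (Covers a n u i0 y ∧ MatchW v p N0 L (Nat.count p i0) r x)) := by
    intro i0 hi0 y X w x hw hxX r
    rw [hcovP _ w y X hw]
    have hc1 : Covers a n u (i0 + r * N0) y ↔ Covers a n u i0 y := by
      unfold Covers
      apply forall_congr'
      intro j
      rw [show i0 + r * N0 + (j : ℕ) = (i0 + (j : ℕ)) + r * N0 from by omega, hu_nsmul]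
    rw [hc1]
    apply and_congr_right
    intro _
    constructor
    · intro h2 l
      have hb := nth_window_mem hinf hwin i0 l.isLt
      have hpq : p (Nat.nth p (Nat.count p i0 + (l : ℕ))) := Nat.nth_mem_of_infinite hinf _
      have hj : Nat.nth p (Nat.count p i0 + (l : ℕ)) - i0 < n := by omega
      have hij : i0 + (Nat.nth p (Nat.count p i0 + (l : ℕ)) - i0)
          = Nat.nth p (Nat.count p i0 + (l : ℕ)) := by omega
      have hpj : p (i0 + r * N0 + (Nat.nth p (Nat.count p i0 + (l : ℕ)) - i0)) := by
        rw [show i0 + r * N0 + (Nat.nth p (Nat.count p i0 + (l : ℕ)) - i0)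
            = Nat.nth p (Nat.count p i0 + (l : ℕ)) + r * N0 from by omega]
        exact (hp_nsmul _ _).2 hpq
      have h3 := h2 ⟨_, hj⟩ hpj
      rw [show i0 + r * N0 + (Nat.nth p (Nat.count p i0 + (l : ℕ)) - i0)
          = Nat.nth p (Nat.count p i0 + (l : ℕ)) + r * N0 from by omega] at h3
      rw [h3]
      exact congrArg some (hxX l ⟨_, hj⟩ hij)
    · intro h2 j hpj
      have hjn : (j : ℕ) < n := j.isLt
      have hpj0 : p (i0 + (j : ℕ)) := by
        refine (hp_nsmul (i0 + (j : ℕ)) r).1 ?_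
        rw [show (i0 + (j : ℕ)) + r * N0 = i0 + r * N0 + (j : ℕ) from by omega]
        exact hpj
      obtain ⟨hc1', hc2', hq⟩ := window_index hinf hwin hpj0 (Nat.le_add_right i0 (j : ℕ))
        (by omega : i0 + (j : ℕ) < i0 + n)
      have hl2 : Nat.count p (i0 + (j : ℕ)) - Nat.count p i0 < L := by omega
      have h3 := h2 ⟨_, hl2⟩
      rw [show Nat.count p i0 + (Nat.count p (i0 + (j : ℕ)) - Nat.count p i0)
          = Nat.count p (i0 + (j : ℕ)) from by omega, hq] at h3
      rw [show (i0 + (j : ℕ)) + r * N0 = i0 + r * N0 + (j : ℕ) from by omega] at h3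
      rw [h3]
      refine congrArg some ?_
      refine (hxX ⟨_, hl2⟩ j ?_).symm
      rw [show Nat.count p i0 + (Nat.count p (i0 + (j : ℕ)) - Nat.count p i0)
          = Nat.count p (i0 + (j : ℕ)) from by omega, hq]
  -- shifting the matching condition
  have hMK : ∀ c r (x : Fin L → Fin k),
      MatchW v p N0 L c (r + K) x ↔ MatchW v p N0 L c r x := by
    intro c r x
    unfold MatchW
    apply forall_congr'
    intro l
    rw [show Nat.nth p (c + (l : ℕ)) + (r + K) * N0
        = (Nat.nth p (c + (l : ℕ)) + r * N0) + K * N0 from by ring, hvK1]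
  have hMmod : ∀ c r (x : Fin L → Fin k),
      MatchW v p N0 L c (r % K) x ↔ MatchW v p N0 L c r x :=
    fun c r x => mod_iff_of_shift (fun r => MatchW v p N0 L c r x) (fun r => hMK c r x) r
  have hshift : ∀ c, CoreW v p N0 L K (c + t) ↔ CoreW v p N0 L K c := by
    intro c
    unfold CoreW
    apply forall_congr'
    intro x
    have h1 : ∀ r : ℕ, MatchW v p N0 L (c + t) r x ↔ MatchW v p N0 L c (r + 1) x := by
      intro r
      unfold MatchW
      apply forall_congr'
      intro l
      have e1 : c + t + (l : ℕ) = (c + (l : ℕ)) + 1 * t := by ring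
      rw [e1, hnth_add]
      rw [show Nat.nth p (c + (l : ℕ)) + 1 * N0 + r * N0
          = Nat.nth p (c + (l : ℕ)) + (r + 1) * N0 from by ring]
    calc (∃! r : Fin K, MatchW v p N0 L (c + t) (r : ℕ) x)
        ↔ (∃! r : Fin K, MatchW v p N0 L c ((r : ℕ) + 1) x) :=
          existsUnique_congr (fun r => h1 (r : ℕ))
      _ ↔ _ := existsUnique_shift hKpos 1 (fun r => MatchW v p N0 L c r x)
          (fun r => hMmod c r x)
  -- the upcycle condition is equivalent to the core condition
  have main_up : (∀ w : Fin n → Fin (a * k), ∃! i : Fin ((a * k) ^ L),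
      Covers (a * k) n P (i : ℕ) w) ↔ (∀ c, CoreW v p N0 L K c) := by
    constructor
    · intro h
      have hstep : ∀ i0, i0 < N0 → CoreW v p N0 L K (Nat.count p i0) := by
        intro i0 hi0 x
        set y : Fin n → Fin a := fun j => (u (i0 + (j : ℕ))).getD ⟨0, by omega⟩ with hy
        set X : Fin n → Fin k := fun j =>
          x ⟨min (Nat.count p (i0 + (j : ℕ)) - Nat.count p i0) (L - 1), by omega⟩ with hX
        set w : Fin n → Fin (a * k) := fun j => ⟨a * (X j : ℕ) + (y j : ℕ), by
          have h1 : (X j : ℕ) + 1 ≤ k := (X j).isLt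
          have h2 : (y j : ℕ) < a := (y j).isLt
          calc a * (X j : ℕ) + (y j : ℕ) < a * (X j : ℕ) + a := by omega
          _ = a * ((X j : ℕ) + 1) := by ring
          _ ≤ a * k := Nat.mul_le_mul_left a h1⟩ with hwdef
        have hwj : ∀ j, (w j : ℕ) = a * (X j : ℕ) + (y j : ℕ) := fun j => rfl
        have hcy : Covers a n u i0 y := by
          intro j
          cases huc : u (i0 + (j : ℕ)) with
          | none => exact Or.inl rfl
          | some b =>
              refine Or.inr ?_
              have hb : y j = b := by simp [hy, huc]
              rw [hb]
        have hxX : ∀ (l : Fin L) (j : Fin n),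
            i0 + (j : ℕ) = Nat.nth p (Nat.count p i0 + (l : ℕ)) → X j = x l := by
          intro l j hij
          rw [hX]
          refine congrArg x (Fin.ext ?_)
          have hcq : Nat.count p (i0 + (j : ℕ)) = Nat.count p i0 + (l : ℕ) := by
            rw [hij]
            exact Nat.count_nth_of_infinite hinf _
          show min (Nat.count p (i0 + (j : ℕ)) - Nat.count p i0) (L - 1) = (l : ℕ)
          have := l.isLt
          rw [hcq]
          omega
        obtain ⟨ifin, hcif, hifu⟩ := h w
        have hifN : (ifin : ℕ) < N0 * K := by rw [← hNsplit]; exact ifin.isLt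
        have hmod : (ifin : ℕ) % N0 = i0 := by
          have hcu := ((hcovP _ w y X hwj).1 hcif).1
          exact (hcovu_pin y i0 hi0 hcy _ hifN).1 hcu
        have hdiv : (ifin : ℕ) / N0 < K := by
          refine (Nat.div_lt_iff_lt_mul hN0pos).2 ?_
          rw [mul_comm K N0]
          exact hifN
        have hdec : (ifin : ℕ) = i0 + ((ifin : ℕ) / N0) * N0 := by
          have h1 := Nat.mod_add_div' (ifin : ℕ) N0
          omega
        refine ⟨⟨(ifin : ℕ) / N0, hdiv⟩, ?_, ?_⟩
        · have hc2 := hcif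
          rw [hdec] at hc2
          exact ((hchar i0 hi0 y X w x hwj hxX _).1 hc2).2
        · rintro r' hr'
          have hcov' : Covers (a * k) n P (i0 + (r' : ℕ) * N0) w :=
            (hchar i0 hi0 y X w x hwj hxX _).2 ⟨hcy, hr'⟩
          have hlt' : i0 + (r' : ℕ) * N0 < (a * k) ^ L := by
            rw [hNsplit]
            have h7 : (r' : ℕ) + 1 ≤ K := r'.isLt
            calc i0 + (r' : ℕ) * N0 < N0 + (r' : ℕ) * N0 := by omega
            _ = ((r' : ℕ) + 1) * N0 := by ring
            _ ≤ K * N0 := Nat.mul_le_mul h7 (le_refl N0)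
            _ = N0 * K := mul_comm _ _
          have heq := hifu ⟨i0 + (r' : ℕ) * N0, hlt'⟩ hcov'
          apply Fin.ext
          have hval : i0 + (r' : ℕ) * N0 = (ifin : ℕ) := congrArg Fin.val heq
          show (r' : ℕ) = (ifin : ℕ) / N0
          have h10 : (r' : ℕ) * N0 = ((ifin : ℕ) / N0) * N0 := by omega
          exact Nat.eq_of_mul_eq_mul_right hN0pos h10
      refine forall_of_lt_of_shift htpos _ hshift ?_
      intro c hc
      have hnlt : Nat.nth p c < N0 := (Nat.lt_nth_iff_count_lt hinf).1 hc
      have h1 := hstep (Nat.nth p c) hnlt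
      rwa [Nat.count_nth_of_infinite hinf] at h1
    · intro h w
      set y : Fin n → Fin a := fun j => ⟨(w j : ℕ) % a, Nat.mod_lt _ hapos⟩ with hy
      set X : Fin n → Fin k := fun j => ⟨(w j : ℕ) / a,
        (Nat.div_lt_iff_lt_mul hapos).2 (by rw [mul_comm k a]; exact (w j).isLt)⟩ with hX
      have hwj : ∀ j, (w j : ℕ) = a * (X j : ℕ) + (y j : ℕ) := by
        intro j
        show (w j : ℕ) = a * ((w j : ℕ) / a) + (w j : ℕ) % a
        exact (Nat.div_add_mod _ a).symm
      obtain ⟨i0f, hcy, hcyu⟩ := hu2 y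
      have hsub : ∀ l : Fin L, Nat.nth p (Nat.count p (i0f : ℕ) + (l : ℕ)) - (i0f : ℕ) < n := by
        intro l
        have := nth_window_mem hinf hwin (i0f : ℕ) l.isLt
        omega
      set x : Fin L → Fin k := fun l =>
        X ⟨Nat.nth p (Nat.count p (i0f : ℕ) + (l : ℕ)) - (i0f : ℕ), hsub l⟩ with hx
      have hxX : ∀ (l : Fin L) (j : Fin n),
          (i0f : ℕ) + (j : ℕ) = Nat.nth p (Nat.count p (i0f : ℕ) + (l : ℕ)) → X j = x l := by
        intro l j hij
        rw [hx]
        refine congrArg X (Fin.ext ?_)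
        show (j : ℕ) = Nat.nth p (Nat.count p (i0f : ℕ) + (l : ℕ)) - (i0f : ℕ)
        omega
      obtain ⟨r0, hr0, hr0u⟩ := h (Nat.count p (i0f : ℕ)) x
      have hlt0 : (i0f : ℕ) + (r0 : ℕ) * N0 < (a * k) ^ L := by
        rw [hNsplit]
        have h7 : (r0 : ℕ) + 1 ≤ K := r0.isLt
        have h8 : (i0f : ℕ) < N0 := i0f.isLt
        calc (i0f : ℕ) + (r0 : ℕ) * N0 < N0 + (r0 : ℕ) * N0 := by omega
        _ = ((r0 : ℕ) + 1) * N0 := by ring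
        _ ≤ K * N0 := Nat.mul_le_mul h7 (le_refl N0)
        _ = N0 * K := mul_comm _ _
      refine ⟨⟨(i0f : ℕ) + (r0 : ℕ) * N0, hlt0⟩, ?_, ?_⟩
      · exact (hchar (i0f : ℕ) i0f.isLt y X w x hwj hxX ((r0 : ℕ))).2 ⟨hcy, hr0⟩
      · rintro i' hci'
        have hi'N : (i' : ℕ) < N0 * K := by rw [← hNsplit]; exact i'.isLt
        obtain ⟨hcu', hcv'⟩ := (hcovP _ w y X hwj).1 hci'
        have hmod : (i' : ℕ) % N0 = (i0f : ℕ) :=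
          (hcovu_pin y (i0f : ℕ) i0f.isLt hcy _ hi'N).1 hcu'
        have hdiv : (i' : ℕ) / N0 < K := by
          refine (Nat.div_lt_iff_lt_mul hN0pos).2 ?_
          rw [mul_comm K N0]
          exact hi'N
        have hdec : (i' : ℕ) = (i0f : ℕ) + ((i' : ℕ) / N0) * N0 := by
          have h1 := Nat.mod_add_div' (i' : ℕ) N0
          omega
        have hc2 := hci'
        rw [hdec] at hc2
        have hm : MatchW v p N0 L (Nat.count p (i0f : ℕ)) ((i' : ℕ) / N0) x :=
          ((hchar (i0f : ℕ) i0f.isLt y X w x hwj hxX _).1 hc2).2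
        have heq := hr0u ⟨(i' : ℕ) / N0, hdiv⟩ hm
        apply Fin.ext
        show (i' : ℕ) = (i0f : ℕ) + (r0 : ℕ) * N0
        have hv2 : (i' : ℕ) / N0 = (r0 : ℕ) := congrArg Fin.val heq
        rw [hv2] at hdec
        exact hdec
  -- the necklace condition is equivalent to the core condition
  have hgetD : ∀ q, p q → ∀ b : Fin k, ((v q).getD (⟨0, hk⟩ : Fin k) = b ↔ v q = some b) := by
    intro q hq b
    obtain ⟨c', hc'⟩ := Option.ne_none_iff_exists'.1 hq
    rw [hc']
    simp
  have main_neck : (∀ j : Fin t, ∀ x : Fin L → Fin k,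
      ∃! m : Fin (t * K), (m : ℕ) % t = (j : ℕ) ∧
        ∀ l : Fin L, (v (Nat.nth p ((m : ℕ) + (l : ℕ)))).getD (⟨0, hk⟩ : Fin k) = x l) ↔
      (∀ c, CoreW v p N0 L K c) := by
    constructor
    · intro h
      refine forall_of_lt_of_shift htpos _ hshift ?_
      intro c hc x
      obtain ⟨m, ⟨hm1, hm2⟩, hmu⟩ := h ⟨c, hc⟩ x
      have hm1' : (m : ℕ) % t = c := hm1
      have hd1 : (m : ℕ) / t < K := by
        refine (Nat.div_lt_iff_lt_mul htpos).2 ?_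
        rw [mul_comm K t]
        exact m.isLt
      have hd2 : (m : ℕ) = c + ((m : ℕ) / t) * t := by
        have h3 := Nat.mod_add_div' (m : ℕ) t
        omega
      refine ⟨⟨(m : ℕ) / t, hd1⟩, ?_, ?_⟩
      · intro l
        have h4 := hm2 l
        rw [show (m : ℕ) + (l : ℕ) = (c + (l : ℕ)) + ((m : ℕ) / t) * t from by omega,
          hnth_add] at h4
        have h6 : p (Nat.nth p (c + (l : ℕ)) + ((m : ℕ) / t) * N0) :=
          (hp_nsmul _ _).2 (Nat.nth_mem_of_infinite hinf _)
        exact (hgetD _ h6 (x l)).1 h4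
      · rintro r' hr'
        have hm'lt : c + (r' : ℕ) * t < t * K := by
          have h7 : (r' : ℕ) + 1 ≤ K := r'.isLt
          calc c + (r' : ℕ) * t < t + (r' : ℕ) * t := by omega
          _ = ((r' : ℕ) + 1) * t := by ring
          _ ≤ K * t := Nat.mul_le_mul h7 (le_refl t)
          _ = t * K := mul_comm _ _
        have hcov' : ((⟨c + (r' : ℕ) * t, hm'lt⟩ : Fin (t * K)) : ℕ) % t = ((⟨c, hc⟩ : Fin t) : ℕ)
            ∧ ∀ l : Fin L, (v (Nat.nth p ((c + (r' : ℕ) * t) + (l : ℕ)))).getD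
              (⟨0, hk⟩ : Fin k) = x l := by
          constructor
          · show (c + (r' : ℕ) * t) % t = c
            rw [Nat.add_mul_mod_self_right, Nat.mod_eq_of_lt hc]
          · intro l
            rw [show (c + (r' : ℕ) * t) + (l : ℕ) = (c + (l : ℕ)) + (r' : ℕ) * t from by omega,
              hnth_add]
            have h6 : p (Nat.nth p (c + (l : ℕ)) + (r' : ℕ) * N0) :=
              (hp_nsmul _ _).2 (Nat.nth_mem_of_infinite hinf _)
            exact (hgetD _ h6 (x l)).2 (hr' l)
        have heq := hmu ⟨c + (r' : ℕ) * t, hm'lt⟩ hcov'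
        apply Fin.ext
        have hval : c + (r' : ℕ) * t = (m : ℕ) := congrArg Fin.val heq
        show (r' : ℕ) = (m : ℕ) / t
        have h10 : (r' : ℕ) * t = ((m : ℕ) / t) * t := by omega
        exact Nat.eq_of_mul_eq_mul_right htpos h10
    · intro h j x
      obtain ⟨r0, hr0, hr0u⟩ := h (j : ℕ) x
      have hmlt : (j : ℕ) + (r0 : ℕ) * t < t * K := by
        have h7 : (r0 : ℕ) + 1 ≤ K := r0.isLt
        have h8 : (j : ℕ) < t := j.isLt
        calc (j : ℕ) + (r0 : ℕ) * t < t + (r0 : ℕ) * t := by omega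
        _ = ((r0 : ℕ) + 1) * t := by ring
        _ ≤ K * t := Nat.mul_le_mul h7 (le_refl t)
        _ = t * K := mul_comm _ _
      refine ⟨⟨(j : ℕ) + (r0 : ℕ) * t, hmlt⟩, ⟨?_, ?_⟩, ?_⟩
      · show ((j : ℕ) + (r0 : ℕ) * t) % t = (j : ℕ)
        rw [Nat.add_mul_mod_self_right, Nat.mod_eq_of_lt j.isLt]
      · intro l
        show (v (Nat.nth p (((j : ℕ) + (r0 : ℕ) * t) + (l : ℕ)))).getD (⟨0, hk⟩ : Fin k) = x l
        rw [show ((j : ℕ) + (r0 : ℕ) * t) + (l : ℕ) = ((j : ℕ) + (l : ℕ)) + (r0 : ℕ) * t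
          from by omega, hnth_add]
        have h6 : p (Nat.nth p ((j : ℕ) + (l : ℕ)) + (r0 : ℕ) * N0) :=
          (hp_nsmul _ _).2 (Nat.nth_mem_of_infinite hinf _)
        exact (hgetD _ h6 (x l)).2 (hr0 l)
      · rintro m' ⟨hm'1, hm'2⟩
        have hd1' : (m' : ℕ) / t < K := by
          refine (Nat.div_lt_iff_lt_mul htpos).2 ?_
          rw [mul_comm K t]
          exact m'.isLt
        have hd2' : (m' : ℕ) = (j : ℕ) + ((m' : ℕ) / t) * t := by
          have h3 := Nat.mod_add_div' (m' : ℕ) t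
          omega
        have hmatch : MatchW v p N0 L (j : ℕ) ((m' : ℕ) / t) x := by
          intro l
          have h4 := hm'2 l
          rw [show (m' : ℕ) + (l : ℕ) = ((j : ℕ) + (l : ℕ)) + ((m' : ℕ) / t) * t
            from by omega, hnth_add] at h4
          have h6 : p (Nat.nth p ((j : ℕ) + (l : ℕ)) + ((m' : ℕ) / t) * N0) :=
            (hp_nsmul _ _).2 (Nat.nth_mem_of_infinite hinf _)
          exact (hgetD _ h6 (x l)).1 h4
        have heq := hr0u ⟨(m' : ℕ) / t, hd1'⟩ hmatch
        apply Fin.ext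
        show (m' : ℕ) = (j : ℕ) + (r0 : ℕ) * t
        have hv2 : (m' : ℕ) / t = (r0 : ℕ) := congrArg Fin.val heq
        rw [hv2] at hd2'
        exact hd2'
  -- periodicity of the necklace word
  have hQper : ∀ i, (v (Nat.nth p (i + t * K))).getD (⟨0, hk⟩ : Fin k)
      = (v (Nat.nth p i)).getD (⟨0, hk⟩ : Fin k) := by
    intro i
    rw [show t * K = K * t from mul_comm t K, hnth_add i K, hvK1]
  -- assemble
  rw [ht_eq]
  unfold IsUpcycle IsPerfectNecklace
  constructor
  · rintro ⟨h1, h2⟩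
    exact ⟨fun i => hQper i, main_neck.2 (main_up.1 h2)⟩
  · rintro ⟨h1, h2⟩
    exact ⟨hPper, main_up.2 (main_neck.1 h2)⟩

end AlphMul

/-- Alphabet multiplier: let `u` be an upcycle for `{0,…,a-1}^n` with diamondicity `d`
(so of length `a ^ (n-d)`), and let `v` be a cyclic partial word over `{0,…,k-1}` with
the same length and frame as `u^(k^(n-d))` (as periodic functions, the same frame as
`u` and period `(a*k)^(n-d)`).  Then `a·v + u^(k^(n-d))` (componentwise, diamonds
staying diamonds) is an upcycle for `{0,…,ak-1}^n` if and only if the total word `v∖◊`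
obtained by deleting the diamonds of `v` (enumerated via `Nat.nth`) is a
`(k, n-d, (n-d)·a^(n-d)/n)`-perfect necklace. -/
theorem alphabet_multiplier (a n d k : ℕ) (ha : 2 ≤ a) (hk : 1 ≤ k) (hn : 0 < n)
    (hd : d ≤ n)
    (u : ℕ → Option (Fin a))
    (hu : IsUpcycle a n (a ^ (n - d)) u)
    (hdiam : ∀ i, ((Finset.range n).filter (fun j => u (i + j) = none)).card = d)
    (v : ℕ → Option (Fin k))
    (hvper : ∀ i, v (i + (a * k) ^ (n - d)) = v i)
    (hframe : ∀ i, v i = none ↔ u i = none) :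
    IsUpcycle (a * k) n ((a * k) ^ (n - d))
      (fun i =>
        match v i, u i with
        | some x, some y => some ⟨a * x.val + y.val, by
            have hx := x.isLt
            have hy := y.isLt
            nlinarith⟩
        | _, _ => none) ↔
    IsPerfectNecklace k (n - d) ((n - d) * a ^ (n - d) / n)
      (fun m => (v (Nat.nth (fun i => v i ≠ none) m)).getD ⟨0, hk⟩) := by
  
  classical
  by_cases hdn : n ≤ d
  · -- degenerate case : every position is a diamond, both sides hold
    have hnd : n - d = 0 := by omega
    have hall : ∀ i, u i = none := by
      intro i
      have h1 := hdiam i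
      have h2 : ((Finset.range n).filter (fun j => u (i + j) = none)) = Finset.range n := by
        apply Finset.eq_of_subset_of_card_le (Finset.filter_subset _ _)
        rw [h1, Finset.card_range]; omega
      have h3 : (0 : ℕ) ∈ (Finset.range n).filter (fun j => u (i + j) = none) := by
        rw [h2]; exact Finset.mem_range.2 hn
      simpa using (Finset.mem_filter.1 h3).2
    have hvnone : ∀ i, v i = none := fun i => (hframe i).2 (hall i)
    have hPnone : ∀ i, (match v i, u i with
        | some x, some y => (some ⟨a * x.val + y.val, by
            have hx := x.isLt; have hy := y.isLt; nlinarith⟩ : Option (Fin (a * k)))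
        | _, _ => none) = none := by
      intro i
      rw [hvnone i]
    simp only [hnd, pow_zero, Nat.zero_mul, Nat.zero_div, Nat.mul_one]
    apply iff_of_true
    · constructor
      · intro i; exact (hPnone _).trans (hPnone _).symm
      · intro w
        refine ⟨⟨0, one_pos⟩, fun j => Or.inl (hPnone _), fun i' _ => Subsingleton.elim _ _⟩
    · constructor
      · intro i; rfl
      · intro j; exact absurd j.isLt (by omega)
  · refine AlphMul.aux_main a n d k ha hk hn (by omega) u hu hdiam v hvper hframe _ ?_ ?_
    · intro i h
      have hv : v i = none := (hframe i).2 h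
      show (match v i, u i with
        | some x, some y => (some ⟨a * x.val + y.val, by
            have hx := x.isLt; have hy := y.isLt; nlinarith⟩ : Option (Fin (a * k)))
        | _, _ => none) = none
      rw [hv]
    · intro i x y hx hy
      refine ⟨⟨a * (x : ℕ) + (y : ℕ), ?_⟩, ?_, rfl⟩
      · have h1 : (x : ℕ) + 1 ≤ k := x.isLt
        have h2 : (y : ℕ) < a := y.isLt
        calc a * (x : ℕ) + (y : ℕ) < a * (x : ℕ) + a := by omega
        _ = a * ((x : ℕ) + 1) := by ring
        _ ≤ a * k := Nat.mul_le_mul_left a h1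
      · show (match v i, u i with
          | some x, some y => (some ⟨a * x.val + y.val, by
              have hx := x.isLt; have hy := y.isLt; nlinarith⟩ : Option (Fin (a * k)))
          | _, _ => none) = some _
        rw [hx, hy]
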